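/- Let p_1 < p_2 < ⋯ < p_n be distinct reals in (0,1] and define bids b_i = i / (p_1 + ⋯ + p_i). Then the bids b_i are strictly decreasing in i, and for every i ∈ {1,…,n}, the value p̂ = 1/b_i = (p_1+⋯+p_i)/i satisfies: the set of ads shown under threshold selection with p̂ is exactly {1,…,i}, and the average CTR of the shown ads equals p̂ (i.e., p̂ is a fixed point of the calibration operator). -/

import Mathlib

open Finset

/-- Single query, single raw prediction, threshold selection.  Let
`p 0 < p 1 < ⋯ < p (n-1)` be CTRs in `(0,1]` and define bids
`b i = (i+1) / (p 0 + ⋯ + p i)`.  Then the bids are strictly decreasing, and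
for every `i`, the value `p̂ = (p 0 + ⋯ + p i) / (i+1) = 1 / b i` shows exactly
the ads `{0,…,i}` (ad `j` shows iff `b j * p̂ ≥ 1`), and the average CTR of the
shown ads equals `p̂`, i.e. `p̂` is a fixed point of the calibration operator. -/
theorem exponentially_many_fixed_points (n : ℕ) (hn : 0 < n)
    (p : Fin n → ℝ) (hmono : StrictMono p)
    (hpos : ∀ i, 0 < p i) (hle : ∀ i, p i ≤ 1)
    (b : Fin n → ℝ)
    (hb : ∀ i : Fin n, b i = ((i : ℕ) + 1 : ℝ) / ∑ j ∈ Finset.Iic i, p j) :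
    StrictAnti b ∧
    ∀ i : Fin n,
      (Finset.univ.filter (fun j : Fin n => b j * ((∑ j ∈ Finset.Iic i, p j) / ((i : ℕ) + 1 : ℝ)) ≥ 1)
        = Finset.Iic i) ∧
      (∑ j ∈ Finset.Iic i, p j) / ((Finset.Iic i).card : ℝ)
        = (∑ j ∈ Finset.Iic i, p j) / ((i : ℕ) + 1 : ℝ) := by
  set S : Fin n → ℝ := fun i => ∑ j ∈ Finset.Iic i, p j with hS
  set A : Fin n → ℝ := fun i => S i / ((i : ℕ) + 1 : ℝ) with hAdef
  have hSpos : ∀ i, 0 < S i := fun i =>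
    Finset.sum_pos (fun j _ => hpos j) ⟨i, Finset.mem_Iic.2 le_rfl⟩
  have hApos : ∀ i, 0 < A i := fun i => div_pos (hSpos i) (by positivity)
  have hAle : ∀ i, A i ≤ p i := by
    intro i
    have h1 : S i ≤ (Finset.Iic i).card • p i :=
      Finset.sum_le_card_nsmul _ _ _ (fun j hj => hmono.monotone (Finset.mem_Iic.1 hj))
    rw [Fin.card_Iic] at h1
    rw [hAdef]
    rw [div_le_iff₀ (by positivity)]
    calc S i ≤ ((i : ℕ) + 1) • p i := h1
      _ = p i * ((i : ℕ) + 1 : ℝ) := by push_cast [nsmul_eq_mul]; ring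
  have hA : StrictMono A := by
    intro i k hik
    have hsplit : Finset.Iic i ∪ Finset.Ioc i k = Finset.Iic k := by
      ext j
      simp only [Finset.mem_union, Finset.mem_Iic, Finset.mem_Ioc, Fin.le_def, Fin.lt_def]
      omega
    have hdisj : Disjoint (Finset.Iic i) (Finset.Ioc i k) := by
      rw [Finset.disjoint_left]
      intro j hj hj'
      simp only [Finset.mem_Iic, Finset.mem_Ioc, Fin.le_def, Fin.lt_def] at hj hj'
      omega
    have hSk : S k = S i + ∑ j ∈ Finset.Ioc i k, p j := by
      rw [hS]; simp only
      rw [← hsplit, Finset.sum_union hdisj]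
    have hne : (Finset.Ioc i k).Nonempty := ⟨k, Finset.mem_Ioc.2 ⟨hik, le_rfl⟩⟩
    have hT : ∑ j ∈ Finset.Ioc i k, (fun _ => A i) j < ∑ j ∈ Finset.Ioc i k, p j := by
      apply Finset.sum_lt_sum_of_nonempty hne
      intro j hj
      exact lt_of_le_of_lt (hAle i) (hmono (Finset.mem_Ioc.1 hj).1)
    rw [Finset.sum_const, Fin.card_Ioc] at hT
    have hSi : S i = ((i : ℕ) + 1 : ℝ) * A i := by
      rw [hAdef]; field_simp
    have hcard : ((k : ℕ) : ℝ) + 1 = ((i : ℕ) + 1 : ℝ) + ((k : ℕ) - (i : ℕ) : ℕ) := by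
      have : (i : ℕ) ≤ (k : ℕ) := hik.le
      push_cast [Nat.cast_sub this]
      ring
    have hkey : (((k : ℕ) : ℝ) + 1) * A i < S k := by
      rw [hSk, hSi, hcard, nsmul_eq_mul] at *
      nlinarith [hT]
    rw [hAdef]
    simp only
    rw [lt_div_iff₀ (by positivity)]
    linarith [hkey]
  have hbA : ∀ i, b i = 1 / A i := by
    intro i
    rw [hb i, hAdef, one_div_div]
  constructor
  · intro i k hik
    rw [hbA i, hbA k]
    exact one_div_lt_one_div_of_lt (hApos i) (hA hik)
  · intro i
    constructor
    · ext j
      simp only [Finset.mem_filter, Finset.mem_univ, true_and, Finset.mem_Iic, ge_iff_le]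
      rw [hbA j, one_div, inv_mul_eq_div, le_div_iff₀ (hApos j), one_mul]
      exact ⟨fun h => hA.le_iff_le.1 h, fun h => hA.monotone h⟩
    · rw [Fin.card_Iic]; push_cast; ring_nf
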